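/- Let n ≥ 1, let U ⊆ ℝⁿ be open, and let b : ℝⁿ → ℝ be a smooth (C^∞) function such that ‖∇b(x)‖ = 1 for every x ∈ U. Then for every natural number J ≥ 1 and every x ∈ U, ⟨∇(y ↦ tr(H(y)^J))(x), ∇b(x)⟩ = −J·tr(H(x)^{J+1}), where H(y) is the Hessian matrix of b at y and H^J its J-th matrix power. -/

import Mathlib

/-- The `i`-th partial derivative `∂ᵢ b` at `x`. -/
noncomputable def pd {n : ℕ} (b : (Fin n → ℝ) → ℝ) (i : Fin n) (x : Fin n → ℝ) : ℝ :=
  fderiv ℝ b x (Pi.single i 1)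

/-- The Hessian matrix of `b` at `x`, with entries `∂ᵢ∂ⱼ b (x)`. -/
noncomputable def hess {n : ℕ} (b : (Fin n → ℝ) → ℝ) (x : Fin n → ℝ) :
    Matrix (Fin n) (Fin n) ℝ :=
  Matrix.of fun i j => pd (pd b j) i x

variable {n : ℕ}

private lemma htop1 : ((⊤:ℕ∞) : WithTop ℕ∞) + 1 ≤ ((⊤:ℕ∞) : WithTop ℕ∞) := by
  have h : ((⊤:ℕ∞) : WithTop ℕ∞) + 1 = ((⊤:ℕ∞) : WithTop ℕ∞) := by norm_cast
  rw [h]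

private lemma htop_nat (m : ℕ) : (m : WithTop ℕ∞) ≤ ((⊤:ℕ∞) : WithTop ℕ∞) := by
  have : ((m:ℕ∞) : WithTop ℕ∞) ≤ ((⊤:ℕ∞) : WithTop ℕ∞) := WithTop.coe_le_coe.mpr le_top
  simpa using this

private lemma htop2 : 2 ≤ ((⊤:ℕ∞) : WithTop ℕ∞) := htop_nat 2

lemma contDiff_pd {f : (Fin n → ℝ) → ℝ} (hf : ContDiff ℝ (⊤ : ℕ∞) f) (i : Fin n) :
    ContDiff ℝ (⊤ : ℕ∞) (pd f i) :=
  (hf.fderiv_right htop1).clm_apply contDiff_const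

lemma pd_mul {f g : (Fin n → ℝ) → ℝ} {x : Fin n → ℝ} (hf : DifferentiableAt ℝ f x)
    (hg : DifferentiableAt ℝ g x) (i : Fin n) :
    pd (fun y => f y * g y) i x = pd f i x * g x + f x * pd g i x := by
  simp only [pd, fderiv_fun_mul hf hg]
  simp [mul_comm]
  ring

lemma pd_sum {ι : Type*} (s : Finset ι) {f : ι → (Fin n → ℝ) → ℝ} {x : Fin n → ℝ}
    (hf : ∀ k ∈ s, DifferentiableAt ℝ (f k) x) (i : Fin n) :
    pd (fun y => ∑ k ∈ s, f k y) i x = ∑ k ∈ s, pd (f k) i x := by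
  simp only [pd, fderiv_fun_sum hf]
  simp

lemma pd_eventually_const {f : (Fin n → ℝ) → ℝ} {x : Fin n → ℝ} {c : ℝ}
    (h : f =ᶠ[nhds x] fun _ => c) (i : Fin n) : pd f i x = 0 := by
  simp only [pd]
  rw [Filter.EventuallyEq.fderiv_eq h]
  simp

lemma pd_comm {f : (Fin n → ℝ) → ℝ} (hf : ContDiff ℝ (⊤ : ℕ∞) f) (i j : Fin n) (x : Fin n → ℝ) :
    pd (pd f i) j x = pd (pd f j) i x := by
  have hsymm : IsSymmSndFDerivAt ℝ f x := hf.contDiffAt.isSymmSndFDerivAt (by rw [minSmoothness_of_isRCLikeNormedField]; exact htop2)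
  have hd : DifferentiableAt ℝ (fderiv ℝ f) x :=
    ((hf.fderiv_right htop1).differentiable (by simp)).differentiableAt
  have expand : ∀ v w : Fin n → ℝ,
      fderiv ℝ (fun y => fderiv ℝ f y v) x w = fderiv ℝ (fderiv ℝ f) x w v := by
    intro v w
    rw [fderiv_clm_apply hd (differentiableAt_const v)]
    simp
  show fderiv ℝ (fun y => fderiv ℝ f y (Pi.single i 1)) x (Pi.single j 1)
      = fderiv ℝ (fun y => fderiv ℝ f y (Pi.single j 1)) x (Pi.single i 1)
  rw [expand, expand, hsymm.eq]

section Main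

variable {b : (Fin n → ℝ) → ℝ}

lemma contDiff_hess_entry (hb : ContDiff ℝ (⊤ : ℕ∞) b) (k l : Fin n) : ContDiff ℝ (⊤ : ℕ∞) (fun y => hess b y k l) :=
  contDiff_pd (contDiff_pd hb l) k

lemma contDiff_pow_entry (hb : ContDiff ℝ (⊤ : ℕ∞) b) (J : ℕ) (k l : Fin n) :
    ContDiff ℝ (⊤ : ℕ∞) (fun y => (hess b y ^ J) k l) := by
  induction J generalizing k l with
  | zero => simpa [pow_zero, Matrix.one_apply] using contDiff_const (c := if k = l then (1:ℝ) else 0)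
  | succ J ih =>
    have : (fun y => (hess b y ^ (J+1)) k l)
        = fun y => ∑ m, (hess b y ^ J) k m * hess b y m l := by
      funext y; simp [pow_succ, Matrix.mul_apply]
    rw [this]
    exact ContDiff.sum fun m _ => (ih k m).mul (contDiff_hess_entry hb m l)

/-- The entrywise derivative matrix of the Hessian. -/
noncomputable def dh (b : (Fin n → ℝ) → ℝ) (i : Fin n) (x : Fin n → ℝ) :
    Matrix (Fin n) (Fin n) ℝ :=
  Matrix.of fun k l => pd (fun y => hess b y k l) i x

lemma pd_pow_entry (hb : ContDiff ℝ (⊤ : ℕ∞) b) (J : ℕ) (i : Fin n) (x : Fin n → ℝ) (k l : Fin n) :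
    pd (fun y => (hess b y ^ (J+1)) k l) i x
      = ∑ m ∈ Finset.range (J+1),
          ((hess b x ^ m) * dh b i x * (hess b x ^ (J - m))) k l := by
  induction J generalizing k l with
  | zero =>
    simp [dh, Matrix.one_mul, Matrix.mul_one, pow_one, pow_zero]
  | succ J ih =>
    have hrw : (fun y => (hess b y ^ (J+2)) k l)
        = fun y => ∑ m, (hess b y ^ (J+1)) k m * hess b y m l := by
      funext y; simp [pow_succ, Matrix.mul_apply]
    have hdm : ∀ (J : ℕ) (k m : Fin n), DifferentiableAt ℝ (fun y => (hess b y ^ J) k m) x :=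
      fun J k m => ((contDiff_pow_entry hb J k m).differentiable (by simp)).differentiableAt
    have hdh : ∀ k m : Fin n, DifferentiableAt ℝ (fun y => hess b y k m) x :=
      fun k m => ((contDiff_hess_entry hb k m).differentiable (by simp)).differentiableAt
    have hps := pd_sum (f := fun (m : Fin n) (y : Fin n → ℝ) => (hess b y ^ (J+1)) k m * hess b y m l)
      (x := x) Finset.univ (fun m _ => (hdm (J+1) k m).mul (hdh m l)) i
    rw [hrw, hps]
    have hpm : ∀ m : Fin n, pd (fun y => (hess b y ^ (J+1)) k m * hess b y m l) i x
        = pd (fun y => (hess b y ^ (J+1)) k m) i x * hess b x m l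
          + (hess b x ^ (J+1)) k m * dh b i x m l := by
      intro m
      exact pd_mul (hdm (J+1) k m) (hdh m l) i
    calc ∑ m, pd (fun y => (hess b y ^ (J+1)) k m * hess b y m l) i x
        = ∑ m, (pd (fun y => (hess b y ^ (J+1)) k m) i x * hess b x m l
            + (hess b x ^ (J+1)) k m * dh b i x m l) := by
          exact Finset.sum_congr rfl fun m _ => hpm m
      _ = (∑ m, (∑ r ∈ Finset.range (J+1),
              (hess b x ^ r * dh b i x * hess b x ^ (J - r)) k m) * hess b x m l)
            + (hess b x ^ (J+1) * dh b i x) k l := by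
          rw [Finset.sum_add_distrib, Matrix.mul_apply]
          congr 1
          exact Finset.sum_congr rfl fun m _ => by rw [ih k m]
      _ = (∑ r ∈ Finset.range (J+1),
              (hess b x ^ r * dh b i x * hess b x ^ (J + 1 - r)) k l)
            + (hess b x ^ (J+1) * dh b i x) k l := by
          congr 1
          have : ∀ m : Fin n, (∑ r ∈ Finset.range (J+1),
              (hess b x ^ r * dh b i x * hess b x ^ (J - r)) k m) * hess b x m l
              = ∑ r ∈ Finset.range (J+1),
              (hess b x ^ r * dh b i x * hess b x ^ (J - r)) k m * hess b x m l := by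
            intro m; rw [Finset.sum_mul]
          simp only [this]
          rw [Finset.sum_comm]
          refine Finset.sum_congr rfl fun r hr => ?_
          have hr' : r ≤ J := Nat.lt_succ_iff.mp (Finset.mem_range.mp hr)
          have h1 : J + 1 - r = (J - r) + 1 := by omega
          rw [h1, pow_succ, ← Matrix.mul_assoc, Matrix.mul_apply]
      _ = ∑ r ∈ Finset.range (J+2),
              (hess b x ^ r * dh b i x * hess b x ^ (J + 1 - r)) k l := by
          conv_rhs => rw [Finset.sum_range_succ]
          congr 1
          simp

lemma pd_trace_pow (hb : ContDiff ℝ (⊤ : ℕ∞) b) (J : ℕ) (i : Fin n) (x : Fin n → ℝ) :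
    pd (fun y => Matrix.trace (hess b y ^ (J+1))) i x
      = ((J:ℝ)+1) * Matrix.trace (hess b x ^ J * dh b i x) := by
  have h1 : (fun y => Matrix.trace (hess b y ^ (J+1)))
      = fun y => ∑ k, (hess b y ^ (J+1)) k k := by
    funext y; simp [Matrix.trace, Matrix.diag]
  have hdm : ∀ (J : ℕ) (k m : Fin n), DifferentiableAt ℝ (fun y => (hess b y ^ J) k m) x :=
    fun J k m => ((contDiff_pow_entry hb J k m).differentiable (by simp)).differentiableAt
  rw [h1, pd_sum Finset.univ (fun k _ => hdm (J+1) k k) i]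
  have h2 : ∀ k : Fin n, pd (fun y => (hess b y ^ (J+1)) k k) i x
      = ∑ r ∈ Finset.range (J+1), (hess b x ^ r * dh b i x * hess b x ^ (J - r)) k k :=
    fun k => pd_pow_entry hb J i x k k
  calc ∑ k, pd (fun y => (hess b y ^ (J+1)) k k) i x
      = ∑ k, ∑ r ∈ Finset.range (J+1), (hess b x ^ r * dh b i x * hess b x ^ (J - r)) k k := by
        exact Finset.sum_congr rfl fun k _ => h2 k
    _ = ∑ r ∈ Finset.range (J+1), Matrix.trace (hess b x ^ r * dh b i x * hess b x ^ (J - r)) := by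
        rw [Finset.sum_comm]
        exact Finset.sum_congr rfl fun r _ => by simp [Matrix.trace, Matrix.diag]
    _ = ∑ r ∈ Finset.range (J+1), Matrix.trace (hess b x ^ J * dh b i x) := by
        refine Finset.sum_congr rfl fun r hr => ?_
        have hr' : r ≤ J := Nat.lt_succ_iff.mp (Finset.mem_range.mp hr)
        have hjr : J - r + r = J := by omega
        rw [Matrix.trace_mul_comm, ← Matrix.mul_assoc, ← pow_add, hjr]
    _ = ((J:ℝ)+1) * Matrix.trace (hess b x ^ J * dh b i x) := by
        rw [Finset.sum_const, Finset.card_range]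
        push_cast [nsmul_eq_mul]
        ring

end Main

/-- If `b` is smooth and satisfies the eikonal identity `‖∇b‖ = 1` on an open set,
then the derivative of `tr(H^J)` along `∇b` equals `-J·tr(H^{J+1})`. -/
theorem normal_deriv_trace_hessian_pow {n : ℕ} (hn : 1 ≤ n)
    (U : Set (Fin n → ℝ)) (hU : IsOpen U)
    (b : (Fin n → ℝ) → ℝ) (hb : ContDiff ℝ (⊤ : ℕ∞) b)
    (heik : ∀ x ∈ U, ∑ k, (pd b k x) ^ 2 = 1) :
    ∀ J : ℕ, 1 ≤ J → ∀ x ∈ U,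
      ∑ i, pd (fun y => Matrix.trace (hess b y ^ J)) i x * pd b i x
        = -(J : ℝ) * Matrix.trace (hess b x ^ (J + 1)) := by
  -- differentiability facts
  have hg : ∀ i, ContDiff ℝ (⊤ : ℕ∞) (pd b i) := fun i => contDiff_pd hb i
  have hgg : ∀ i k, ContDiff ℝ (⊤ : ℕ∞) (pd (pd b i) k) := fun i k => contDiff_pd (hg i) k
  have hda : ∀ (f : (Fin n → ℝ) → ℝ), ContDiff ℝ (⊤ : ℕ∞) f → ∀ z, DifferentiableAt ℝ f z :=
    fun f hf z => ((hf.differentiable (by simp)) z)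
  -- Step 1 : first derivative of the eikonal identity
  have S1 : ∀ z ∈ U, ∀ k, ∑ i, pd b i z * pd (pd b i) k z = 0 := by
    intro z hz k
    have he : (fun y => ∑ i, (pd b i y) ^ 2) =ᶠ[nhds z] fun _ => 1 := by
      filter_upwards [hU.mem_nhds hz] with y hy using heik y hy
    have h0 := pd_eventually_const he k
    have hrw : (fun y => ∑ i, (pd b i y) ^ 2) = fun y => ∑ i, pd b i y * pd b i y := by
      funext y; exact Finset.sum_congr rfl fun i _ => sq (pd b i y) ▸ (sq (pd b i y)).symm ▸ (pow_two (pd b i y))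
    rw [hrw, pd_sum (f := fun i y => pd b i y * pd b i y) Finset.univ (fun i _ => ((hda _ (hg i) z).mul (hda _ (hg i) z))) k] at h0
    have h1 : ∀ i : Fin n, pd (fun y => pd b i y * pd b i y) k z
        = pd (pd b i) k z * pd b i z + pd b i z * pd (pd b i) k z :=
      fun i => pd_mul (hda _ (hg i) z) (hda _ (hg i) z) k
    rw [Finset.sum_congr rfl fun i _ => h1 i] at h0
    have h2 : ∑ i, (pd (pd b i) k z * pd b i z + pd b i z * pd (pd b i) k z)
        = 2 * ∑ i, pd b i z * pd (pd b i) k z := by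
      rw [Finset.mul_sum]
      exact Finset.sum_congr rfl fun i _ => by ring
    rw [h2] at h0
    linarith
  -- Step 2 : second derivative of the eikonal identity
  have S2 : ∀ z ∈ U, ∀ k l, ∑ i, pd b i z * pd (pd (pd b i) k) l z
      = - ∑ i, pd (pd b i) l z * pd (pd b i) k z := by
    intro z hz k l
    have he : (fun y => ∑ i, pd b i y * pd (pd b i) k y) =ᶠ[nhds z] fun _ => 0 := by
      filter_upwards [hU.mem_nhds hz] with y hy using S1 y hy k
    have h0 := pd_eventually_const he l
    rw [pd_sum (f := fun i y => pd b i y * pd (pd b i) k y) Finset.univ (fun i _ => ((hda _ (hg i) z).mul (hda _ (hgg i k) z))) l] at h0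
    have h1 : ∀ i : Fin n, pd (fun y => pd b i y * pd (pd b i) k y) l z
        = pd (pd b i) l z * pd (pd b i) k z + pd b i z * pd (pd (pd b i) k) l z :=
      fun i => pd_mul (hda _ (hg i) z) (hda _ (hgg i k) z) l
    rw [Finset.sum_congr rfl fun i _ => h1 i, Finset.sum_add_distrib] at h0
    linarith
  -- Step 3 : contraction of ∇b with the derivative of the Hessian
  have S3 : ∀ z ∈ U, ∀ k l : Fin n, ∑ i, pd b i z * dh b i z k l
      = -((hess b z * hess b z) k l) := by
    intro z hz k l
    have hsym3 : ∀ i : Fin n, dh b i z k l = pd (pd (pd b i) k) l z := by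
      intro i
      show pd (pd (pd b l) k) i z = pd (pd (pd b i) k) l z
      rw [pd_comm (hg l) k i z]
      have hinner : pd (pd b l) i = pd (pd b i) l := funext fun w => pd_comm hb l i w
      rw [hinner, pd_comm (hg i) l k z]
    calc ∑ i, pd b i z * dh b i z k l
        = ∑ i, pd b i z * pd (pd (pd b i) k) l z := by
          exact Finset.sum_congr rfl fun i _ => by rw [hsym3 i]
      _ = - ∑ i, pd (pd b i) l z * pd (pd b i) k z := S2 z hz k l
      _ = -((hess b z * hess b z) k l) := by
          congr 1
          rw [Matrix.mul_apply]
          refine Finset.sum_congr rfl fun m _ => ?_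
          show pd (pd b m) l z * pd (pd b m) k z = hess b z k m * hess b z m l
          show pd (pd b m) l z * pd (pd b m) k z = pd (pd b m) k z * pd (pd b l) m z
          rw [pd_comm hb m l z]
          ring
  -- Final assembly
  intro J hJ x hx
  obtain ⟨J', rfl⟩ : ∃ J', J = J' + 1 := ⟨J - 1, by omega⟩
  have key : ∀ i, pd (fun y => Matrix.trace (hess b y ^ (J'+1))) i x
      = ((J':ℝ)+1) * Matrix.trace (hess b x ^ J' * dh b i x) := fun i => pd_trace_pow hb J' i x
  have htr : Matrix.trace (hess b x ^ J' * (hess b x * hess b x))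
      = ∑ k, ∑ m, (hess b x ^ J') k m * (hess b x * hess b x) m k := by
    simp [Matrix.trace, Matrix.diag, Matrix.mul_apply]
  calc ∑ i, pd (fun y => Matrix.trace (hess b y ^ (J'+1))) i x * pd b i x
      = ((J':ℝ)+1) * ∑ i, Matrix.trace (hess b x ^ J' * dh b i x) * pd b i x := by
        rw [Finset.mul_sum]
        exact Finset.sum_congr rfl fun i _ => by rw [key i]; ring
    _ = ((J':ℝ)+1) * (- Matrix.trace (hess b x ^ (J' + 1 + 1))) := by
        congr 1
        calc ∑ i, Matrix.trace (hess b x ^ J' * dh b i x) * pd b i x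
            = ∑ i, ∑ k, ∑ m, (hess b x ^ J') k m * dh b i x m k * pd b i x := by
              refine Finset.sum_congr rfl fun i _ => ?_
              simp [Matrix.trace, Matrix.diag, Matrix.mul_apply, Finset.sum_mul]
          _ = ∑ k, ∑ m, (hess b x ^ J') k m * ∑ i, pd b i x * dh b i x m k := by
              rw [Finset.sum_comm]
              refine Finset.sum_congr rfl fun k _ => ?_
              rw [Finset.sum_comm]
              refine Finset.sum_congr rfl fun m _ => ?_
              rw [Finset.mul_sum]
              exact Finset.sum_congr rfl fun i _ => by ring
          _ = ∑ k, ∑ m, (hess b x ^ J') k m * (-((hess b x * hess b x) m k)) := by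
              exact Finset.sum_congr rfl fun k _ => Finset.sum_congr rfl fun m _ => by
                rw [S3 x hx m k]
          _ = - Matrix.trace (hess b x ^ J' * (hess b x * hess b x)) := by
              rw [htr]
              simp [mul_neg]
          _ = - Matrix.trace (hess b x ^ (J' + 1 + 1)) := by
              congr 1
              rw [pow_succ, pow_succ, Matrix.mul_assoc]
    _ = -((J' + 1 : ℕ) : ℝ) * Matrix.trace (hess b x ^ (J' + 1 + 1)) := by push_cast; ring
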